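/- For every real q ≠ 1 and all integers n ≥ 1 and k ≥ 0: ∑_{γ=0}^{n−1} q^γ γ^k = (1/(1−q)) ∑_{i=0}^{k} (q/(1−q))^i Δ^i 0^k − (q^n/(1−q)) ∑_{i=0}^{k} (q/(1−q))^i Δ^i n^k, where Δ^i n^k = ∑_{l=0}^{i} (−1)^{i−l} binomial(i,l) (n+l)^k. -/

import Mathlib

open Finset

noncomputable def Sd (m : ℕ) (f : ℕ → ℝ) : ℝ :=
  ∑ l ∈ Finset.range (m+1), (-1:ℝ)^(m-l) * (Nat.choose m l : ℝ) * f l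

noncomputable def Td (m : ℕ) (f : ℕ → ℝ) : ℝ :=
  ∑ l ∈ Finset.range (m+1), (-1:ℝ)^l * (Nat.choose m l : ℝ) * f l

lemma Sd_eq (m : ℕ) (f : ℕ → ℝ) : Sd m f = (-1:ℝ)^m * Td m f := by
  unfold Sd Td
  rw [mul_sum]
  refine sum_congr rfl fun l hl => ?_
  have hlm : l ≤ m := Nat.lt_succ_iff.mp (mem_range.mp hl)
  have h2 : (-1:ℝ)^(m-l) = (-1)^m * (-1)^l := by
    have : (-1:ℝ)^m = (-1)^(m-l) * (-1)^l := by
      rw [← pow_add, Nat.sub_add_cancel hlm]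
    rw [this, mul_assoc, ← pow_add, ← two_mul, pow_mul]
    norm_num
  rw [h2]; ring

lemma Td_pascal (m : ℕ) (f : ℕ → ℝ) :
    Td (m+1) f = Td m f - Td m (fun l => f (l+1)) := by
  unfold Td
  rw [Finset.sum_range_succ' (fun l => (-1:ℝ)^l * (Nat.choose (m+1) l : ℝ) * f l) (m+1)]
  have h1 : ∀ l ∈ Finset.range (m+1),
      (-1:ℝ)^(l+1) * (Nat.choose (m+1) (l+1) : ℝ) * f (l+1)
        = -((-1:ℝ)^l * (Nat.choose m l : ℝ) * f (l+1))
          - (-1:ℝ)^l * (Nat.choose m (l+1) : ℝ) * f (l+1) := by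
    intro l _
    rw [Nat.choose_succ_succ]
    push_cast
    ring
  rw [sum_congr rfl h1, sum_sub_distrib]
  have hB : ∑ l ∈ Finset.range (m+1), (-1:ℝ)^l * (Nat.choose m (l+1) : ℝ) * f (l+1)
      = ∑ l ∈ Finset.range m, (-1:ℝ)^l * (Nat.choose m (l+1) : ℝ) * f (l+1) := by
    rw [Finset.sum_range_succ, Nat.choose_succ_self]
    simp
  rw [hB]
  rw [Finset.sum_range_succ' (fun l => (-1:ℝ)^l * (Nat.choose m l : ℝ) * f l) m]
  have h2 : ∀ l ∈ Finset.range m,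
      (-1:ℝ)^(l+1) * (Nat.choose m (l+1) : ℝ) * f (l+1)
        = -((-1:ℝ)^l * (Nat.choose m (l+1) : ℝ) * f (l+1)) := by
    intro l _; ring
  rw [sum_congr rfl h2, Finset.sum_neg_distrib]
  simp
  ring

lemma Td_vanish : ∀ m : ℕ, ∀ k < m, ∀ x : ℝ, Td m (fun l => (x + l)^k) = 0 := by
  intro m
  induction m with
  | zero => intro k hk; omega
  | succ m ih =>
    intro k hk x
    rw [Td_pascal]
    have hshift : Td m (fun l => (x + ((l+1 : ℕ):ℝ))^k)
        = Td m (fun l => ((x+1) + l)^k) := by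
      unfold Td
      refine sum_congr rfl fun l _ => ?_
      push_cast
      ring_nf
    rw [hshift]
    have expand : ∀ l : ℕ, ((x+1) + (l:ℝ))^k
        = ∑ j ∈ Finset.range (k+1), (Nat.choose k j : ℝ) * (x + l)^j := by
      intro l
      have h : (x+1) + (l:ℝ) = (x + l) + 1 := by ring
      rw [h, add_pow]
      refine sum_congr rfl fun j _ => ?_
      ring
    have lin : Td m (fun l => ((x+1) + (l:ℝ))^k)
        = ∑ j ∈ Finset.range (k+1), (Nat.choose k j : ℝ) * Td m (fun l => (x + l)^j) := by
      calc Td m (fun l => ((x+1) + (l:ℝ))^k)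
          = ∑ l ∈ Finset.range (m+1), ∑ j ∈ Finset.range (k+1),
              (Nat.choose k j : ℝ) * ((-1:ℝ)^l * (Nat.choose m l : ℝ) * (x + l)^j) := by
            unfold Td
            refine sum_congr rfl fun l _ => ?_
            beta_reduce
            rw [expand l, mul_sum]
            exact sum_congr rfl fun j _ => by ring
        _ = ∑ j ∈ Finset.range (k+1), ∑ l ∈ Finset.range (m+1),
              (Nat.choose k j : ℝ) * ((-1:ℝ)^l * (Nat.choose m l : ℝ) * (x + l)^j) :=
            Finset.sum_comm
        _ = _ := by
            refine sum_congr rfl fun j _ => ?_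
            unfold Td
            rw [mul_sum]
    rw [lin, Finset.sum_range_succ]
    have hzero : ∑ j ∈ Finset.range k, (Nat.choose k j : ℝ) * Td m (fun l => (x + l)^j) = 0 := by
      refine sum_eq_zero fun j hj => ?_
      have hjk := mem_range.mp hj
      rw [ih j (by omega) x, mul_zero]
    rw [hzero, Nat.choose_self]
    push_cast
    ring

lemma Sd_pascal (m : ℕ) (f : ℕ → ℝ) :
    Sd (m+1) f = Sd m (fun l => f (l+1)) - Sd m f := by
  rw [Sd_eq, Sd_eq, Sd_eq, Td_pascal, pow_succ]
  ring

lemma Sd_vanish (m k : ℕ) (hk : k < m) (x : ℝ) : Sd m (fun l => (x + l)^k) = 0 := by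
  rw [Sd_eq, Td_vanish m k hk x, mul_zero]

lemma key (q : ℝ) (h1 : (1:ℝ) - q ≠ 0) (k : ℕ) (x : ℝ) :
    (∑ i ∈ Finset.range (k+1), (q/(1-q))^i * Sd i (fun l => (x + l)^k))
      - q * (∑ i ∈ Finset.range (k+1), (q/(1-q))^i * Sd i (fun l => ((x+1) + l)^k))
    = (1-q) * x^k := by
  have hSd : ∀ i : ℕ, Sd i (fun l => ((x+1) + (l:ℝ))^k)
      = Sd (i+1) (fun l => (x + l)^k) + Sd i (fun l => (x + l)^k) := by
    intro i
    have hp := Sd_pascal i (fun l => (x + (l:ℝ))^k)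
    have hsh : Sd i (fun l => (x + ((l+1:ℕ):ℝ))^k) = Sd i (fun l => ((x+1) + l)^k) := by
      unfold Sd
      refine sum_congr rfl fun l _ => ?_
      push_cast
      ring_nf
    rw [hsh] at hp
    linarith
  have hrq : ∀ i : ℕ, q * (q/(1-q))^i = (1-q) * (q/(1-q))^(i+1) := by
    intro i
    rw [pow_succ]
    field_simp
  set a : ℕ → ℝ := fun i => (q/(1-q))^i * Sd i (fun l => (x + (l:ℝ))^k) with ha
  have step1 : (∑ i ∈ Finset.range (k+1), (q/(1-q))^i * Sd i (fun l => (x + l)^k))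
      - q * (∑ i ∈ Finset.range (k+1), (q/(1-q))^i * Sd i (fun l => ((x+1) + l)^k))
      = ∑ i ∈ Finset.range (k+1), ((1-q) * a i - (1-q) * a (i+1)) := by
    rw [mul_sum, ← sum_sub_distrib]
    refine sum_congr rfl fun i _ => ?_
    rw [hSd i, ha]
    beta_reduce
    linear_combination (-(Sd (i+1) (fun l => (x + (l:ℝ))^k))) * hrq i
  rw [step1]
  have step2 : ∑ i ∈ Finset.range (k+1), ((1-q) * a i - (1-q) * a (i+1))
      = (1-q) * (a 0 - a (k+1)) := by
    rw [← Finset.sum_range_sub' a (k+1), mul_sum]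
    exact sum_congr rfl fun i _ => by ring
  rw [step2]
  have ha0 : a 0 = x^k := by simp [ha, Sd]
  have hak : a (k+1) = 0 := by
    rw [ha]
    beta_reduce
    rw [Sd_vanish (k+1) k (by omega) x, mul_zero]
  rw [ha0, hak]
  ring

/-- Hamming's summation formula: for `q ≠ 1`, `n ≥ 1`, `k ≥ 0`,
`∑_{γ=0}^{n-1} q^γ γ^k = (1/(1-q)) ∑_{i=0}^k (q/(1-q))^i Δ^i 0^k
  − (q^n/(1-q)) ∑_{i=0}^k (q/(1-q))^i Δ^i n^k`. -/
theorem finite_geometric_power_sum (q : ℝ) (hq : q ≠ 1) (n k : ℕ) (hn : 1 ≤ n) :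
    ∑ γ ∈ Finset.range n, q ^ γ * (γ : ℝ) ^ k
      = 1 / (1 - q) * ∑ i ∈ Finset.range (k + 1), (q / (1 - q)) ^ i *
            (∑ l ∈ Finset.range (i + 1),
              (-1 : ℝ) ^ (i - l) * (Nat.choose i l : ℝ) * (l : ℝ) ^ k)
        - q ^ n / (1 - q) * ∑ i ∈ Finset.range (k + 1), (q / (1 - q)) ^ i *
            (∑ l ∈ Finset.range (i + 1),
              (-1 : ℝ) ^ (i - l) * (Nat.choose i l : ℝ) * ((n : ℝ) + (l : ℝ)) ^ k) := by
  have h1 : (1:ℝ) - q ≠ 0 := sub_ne_zero_of_ne (Ne.symm hq)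
  have gen : ∀ N : ℕ, ∑ γ ∈ Finset.range N, q ^ γ * (γ : ℝ) ^ k
      = 1 / (1 - q) * ∑ i ∈ Finset.range (k + 1), (q / (1 - q)) ^ i *
            Sd i (fun l => ((0:ℝ) + l)^k)
        - q ^ N / (1 - q) * ∑ i ∈ Finset.range (k + 1), (q / (1 - q)) ^ i *
            Sd i (fun l => ((N:ℝ) + l)^k) := by
    intro N
    induction N with
    | zero => simp
    | succ N ih =>
      rw [Finset.sum_range_succ, ih]
      have hcast : ∑ i ∈ Finset.range (k + 1), (q / (1 - q)) ^ i *
            Sd i (fun l => (((N+1:ℕ):ℝ) + l)^k)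
          = ∑ i ∈ Finset.range (k + 1), (q / (1 - q)) ^ i *
            Sd i (fun l => (((N:ℝ)+1) + l)^k) := by
        refine sum_congr rfl fun i _ => ?_
        congr 1
        unfold Sd
        refine sum_congr rfl fun l _ => ?_
        push_cast
        ring_nf
      rw [hcast]
      have hk := key q h1 k (N:ℝ)
      set S1 := ∑ i ∈ Finset.range (k + 1), (q / (1 - q)) ^ i *
            Sd i (fun l => ((N:ℝ) + l)^k) with hS1
      set S2 := ∑ i ∈ Finset.range (k + 1), (q / (1 - q)) ^ i *
            Sd i (fun l => (((N:ℝ)+1) + l)^k) with hS2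
      have key2 : q^N/(1-q) * S1 - q^(N+1)/(1-q) * S2 = q^N * (N:ℝ)^k := by
        field_simp
        linear_combination q^N * hk
      push_cast
      linarith [key2]
  have e1 : ∀ i ∈ Finset.range (k+1), (q / (1 - q)) ^ i * Sd i (fun l => ((0:ℝ) + l)^k)
      = (q / (1 - q)) ^ i * (∑ l ∈ Finset.range (i + 1),
          (-1 : ℝ) ^ (i - l) * (Nat.choose i l : ℝ) * (l : ℝ) ^ k) := by
    intro i _
    congr 1
    unfold Sd
    refine sum_congr rfl fun l _ => ?_
    beta_reduce
    rw [zero_add]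
  have e2 : ∀ i ∈ Finset.range (k+1), (q / (1 - q)) ^ i * Sd i (fun l => ((n:ℝ) + l)^k)
      = (q / (1 - q)) ^ i * (∑ l ∈ Finset.range (i + 1),
          (-1 : ℝ) ^ (i - l) * (Nat.choose i l : ℝ) * ((n : ℝ) + (l : ℝ)) ^ k) := by
    intro i _
    rfl
  rw [gen n, sum_congr rfl e1, sum_congr rfl e2]
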